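/- Consider the polynomial h₆(x,t,w) = w² + t³ + α·w·t·x + β·t²·x² + γ·w·x³ + δ·t·x⁴ + ε·x⁶ in variables x, t, w over ℂ, where α, β, γ, δ, ε ∈ ℂ are arbitrary. Then h₆ is irreducible in ℂ[x,t,w]. -/

import Mathlib

section Aux

open Polynomial

/-- A monic quadratic `Y² + P·Y + Q` over `B[t]` (`B` a domain), where `Q` is monic of
odd degree 3 and `P` has degree ≤ 1, is irreducible. -/
theorem h6_aux {B : Type*} [CommRing B] [IsDomain B] (P Q : B[X])
    (hQm : Q.Monic) (hQ3 : Q.natDegree = 3) (hP : P.natDegree ≤ 1) :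
    Irreducible (X ^ 2 + C P * X + C Q : (B[X])[X]) := by
  have hdeg : (C P * X + C Q : (B[X])[X]).degree < 2 := by
    apply lt_of_le_of_lt (degree_add_le _ _)
    apply max_lt
    · apply lt_of_le_of_lt (degree_mul_le _ _)
      have h1 : (C P : (B[X])[X]).degree ≤ 0 := degree_C_le
      have h2 : (X : (B[X])[X]).degree ≤ 1 := degree_X_le
      calc (C P : (B[X])[X]).degree + (X : (B[X])[X]).degree ≤ 0 + 1 := add_le_add h1 h2
        _ < 2 := by norm_num
    · exact lt_of_le_of_lt degree_C_le (by norm_num)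
  have hf : (X ^ 2 + C P * X + C Q : (B[X])[X]) = X ^ 2 + (C P * X + C Q) := by ring
  have hm : (X ^ 2 + C P * X + C Q : (B[X])[X]).Monic := by
    rw [hf]; exact monic_X_pow_add hdeg
  have hnd : (X ^ 2 + C P * X + C Q : (B[X])[X]).natDegree = 2 := by
    rw [hf]
    have : (X ^ 2 + (C P * X + C Q) : (B[X])[X]).degree = 2 := by
      rw [add_comm, degree_add_eq_right_of_degree_lt (by simpa using hdeg), degree_X_pow]; rfl
    exact natDegree_eq_of_degree_eq_some this
  by_contra hirr
  obtain ⟨c₁, c₂, h0, h1⟩ := (hm.not_irreducible_iff_exists_add_mul_eq_coeff hnd).mp hirr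
  have hc0 : (X ^ 2 + C P * X + C Q : (B[X])[X]).coeff 0 = Q := by simp
  have hc1 : (X ^ 2 + C P * X + C Q : (B[X])[X]).coeff 1 = P := by simp
  rw [hc0] at h0; rw [hc1] at h1
  have hc₁ : c₁ ≠ 0 := by rintro rfl; simp at h0; exact hQm.ne_zero h0
  have hc₂ : c₂ ≠ 0 := by rintro rfl; simp at h0; exact hQm.ne_zero h0
  have hsum : c₁.natDegree + c₂.natDegree = 3 := by
    rw [← natDegree_mul hc₁ hc₂, ← h0, hQ3]
  have hne : c₁.natDegree ≠ c₂.natDegree := by omega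
  have key : ∀ a b : B[X], a ≠ 0 → b ≠ 0 → a.natDegree + b.natDegree = 3 →
      a.natDegree < b.natDegree → (a + b).natDegree ≤ 1 → False := by
    intro a b ha hb hs hlt hle
    have h2 : 2 ≤ b.natDegree := by omega
    have hcoeff : (a + b).coeff b.natDegree = b.leadingCoeff := by
      rw [coeff_add, coeff_eq_zero_of_natDegree_lt hlt, zero_add, coeff_natDegree]
    have : (a + b).coeff b.natDegree = 0 :=
      coeff_eq_zero_of_natDegree_lt (lt_of_le_of_lt hle (by omega))
    rw [hcoeff] at this
    exact hb (leadingCoeff_eq_zero.mp this)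
  rcases lt_or_gt_of_ne hne with h | h
  · exact key c₁ c₂ hc₁ hc₂ hsum h (h1 ▸ hP)
  · exact key c₂ c₁ hc₂ hc₁ (by omega) h (by rw [add_comm]; exact h1 ▸ hP)

end Aux

open MvPolynomial

noncomputable def h6e0 : MvPolynomial (Fin 1) ℂ ≃+* Polynomial ℂ :=
  (MvPolynomial.finSuccEquiv ℂ 0).toRingEquiv.trans
    (Polynomial.mapEquiv (MvPolynomial.isEmptyRingEquiv ℂ (Fin 0)))

noncomputable def h6e1 : MvPolynomial (Fin 2) ℂ ≃+* Polynomial (Polynomial ℂ) :=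
  (MvPolynomial.finSuccEquiv ℂ 1).toRingEquiv.trans (Polynomial.mapEquiv h6e0)

noncomputable def h6e : MvPolynomial (Fin 3) ℂ ≃+* Polynomial (Polynomial (Polynomial ℂ)) :=
  (MvPolynomial.renameEquiv ℂ (Equiv.swap (0:Fin 3) 2)).toRingEquiv.trans
    ((MvPolynomial.finSuccEquiv ℂ 2).toRingEquiv.trans (Polynomial.mapEquiv h6e1))

theorem h6e0_X : h6e0 (X 0) = Polynomial.X := by
  simp [h6e0, MvPolynomial.finSuccEquiv_X_zero]

theorem h6e0_C (a : ℂ) : h6e0 (C a) = Polynomial.C a := by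
  simp [h6e0, MvPolynomial.finSuccEquiv_apply]
  exact (MvPolynomial.coeff_C _ _).trans (if_pos (Subsingleton.elim _ _))

theorem h6e1_X0 : h6e1 (X 0) = Polynomial.X := by
  simp [h6e1, MvPolynomial.finSuccEquiv_X_zero]

theorem h6e1_X1 : h6e1 (X 1) = Polynomial.C Polynomial.X := by
  have h : (1 : Fin 2) = Fin.succ 0 := rfl
  rw [h6e1]
  simp only [RingEquiv.trans_apply, AlgEquiv.toRingEquiv_eq_coe, AlgEquiv.coe_ringEquiv,
    Polynomial.mapEquiv_apply, h, MvPolynomial.finSuccEquiv_X_succ]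
  simp [h6e0_X]

theorem h6e1_C (a : ℂ) : h6e1 (C a) = Polynomial.C (Polynomial.C a) := by
  rw [h6e1]
  simp only [RingEquiv.trans_apply, AlgEquiv.toRingEquiv_eq_coe, AlgEquiv.coe_ringEquiv,
    Polynomial.mapEquiv_apply, MvPolynomial.finSuccEquiv_apply, eval₂Hom_C]
  simp [h6e0_C]

theorem h6e_X0 : h6e (X 0) = Polynomial.C (Polynomial.C Polynomial.X) := by
  rw [h6e]
  simp only [RingEquiv.trans_apply, AlgEquiv.toRingEquiv_eq_coe, AlgEquiv.coe_ringEquiv,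
    renameEquiv_apply, rename_X, Equiv.swap_apply_left]
  have h : (2 : Fin 3) = Fin.succ 1 := rfl
  rw [h, MvPolynomial.finSuccEquiv_X_succ]
  simp [Polynomial.mapEquiv_apply, h6e1_X1]

theorem h6e_X1 : h6e (X 1) = Polynomial.C Polynomial.X := by
  rw [h6e]
  simp only [RingEquiv.trans_apply, AlgEquiv.toRingEquiv_eq_coe, AlgEquiv.coe_ringEquiv,
    renameEquiv_apply, rename_X]
  have hs : Equiv.swap (0:Fin 3) 2 1 = 1 := by decide
  rw [hs]
  have h : (1 : Fin 3) = Fin.succ 0 := rfl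
  rw [h, MvPolynomial.finSuccEquiv_X_succ]
  simp [Polynomial.mapEquiv_apply, h6e1_X0]

theorem h6e_X2 : h6e (X 2) = Polynomial.X := by
  rw [h6e]
  simp only [RingEquiv.trans_apply, AlgEquiv.toRingEquiv_eq_coe, AlgEquiv.coe_ringEquiv,
    renameEquiv_apply, rename_X, Equiv.swap_apply_right]
  rw [MvPolynomial.finSuccEquiv_X_zero]
  simp [Polynomial.mapEquiv_apply]

theorem h6e_C (a : ℂ) : h6e (C a) = Polynomial.C (Polynomial.C (Polynomial.C a)) := by
  rw [h6e]
  simp only [RingEquiv.trans_apply, AlgEquiv.toRingEquiv_eq_coe, AlgEquiv.coe_ringEquiv,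
    renameEquiv_apply, rename_C, MvPolynomial.finSuccEquiv_apply, eval₂Hom_C,
    Polynomial.mapEquiv_apply, RingHom.comp_apply, Polynomial.map_C]
  exact congrArg Polynomial.C (h6e1_C a)

theorem h6_Q_spec (β δ ε : ℂ) :
    (Polynomial.X ^ 3 + Polynomial.C (Polynomial.C β * Polynomial.X ^ 2) * Polynomial.X ^ 2 +
      Polynomial.C (Polynomial.C δ * Polynomial.X ^ 4) * Polynomial.X +
      Polynomial.C (Polynomial.C ε * Polynomial.X ^ 6) :
      Polynomial (Polynomial ℂ)).Monic ∧
    (Polynomial.X ^ 3 + Polynomial.C (Polynomial.C β * Polynomial.X ^ 2) * Polynomial.X ^ 2 +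
      Polynomial.C (Polynomial.C δ * Polynomial.X ^ 4) * Polynomial.X +
      Polynomial.C (Polynomial.C ε * Polynomial.X ^ 6) :
      Polynomial (Polynomial ℂ)).natDegree = 3 := by
  have hdQ : (Polynomial.C (Polynomial.C β * Polynomial.X ^ 2) * Polynomial.X ^ 2 +
      Polynomial.C (Polynomial.C δ * Polynomial.X ^ 4) * Polynomial.X +
      Polynomial.C (Polynomial.C ε * Polynomial.X ^ 6) :
      Polynomial (Polynomial ℂ)).degree < 3 := by
    apply lt_of_le_of_lt (Polynomial.degree_add_le _ _)
    apply max_lt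
    · apply lt_of_le_of_lt (Polynomial.degree_add_le _ _)
      apply max_lt
      · apply lt_of_le_of_lt (Polynomial.degree_mul_le _ _)
        calc (Polynomial.C (Polynomial.C β * Polynomial.X ^ 2) :
              Polynomial (Polynomial ℂ)).degree + (Polynomial.X ^ 2 :
              Polynomial (Polynomial ℂ)).degree
            ≤ 0 + 2 := add_le_add Polynomial.degree_C_le (by rw [Polynomial.degree_X_pow]; norm_cast)
          _ < 3 := by norm_num
      · apply lt_of_le_of_lt (Polynomial.degree_mul_le _ _)
        calc (Polynomial.C (Polynomial.C δ * Polynomial.X ^ 4) :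
              Polynomial (Polynomial ℂ)).degree + (Polynomial.X :
              Polynomial (Polynomial ℂ)).degree
            ≤ 0 + 1 := add_le_add Polynomial.degree_C_le Polynomial.degree_X_le
          _ < 3 := by norm_num
    · exact lt_of_le_of_lt Polynomial.degree_C_le (by norm_num)
  have hQ' : (Polynomial.X ^ 3 +
      Polynomial.C (Polynomial.C β * Polynomial.X ^ 2) * Polynomial.X ^ 2 +
      Polynomial.C (Polynomial.C δ * Polynomial.X ^ 4) * Polynomial.X +
      Polynomial.C (Polynomial.C ε * Polynomial.X ^ 6) : Polynomial (Polynomial ℂ)) =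
      Polynomial.X ^ 3 +
      (Polynomial.C (Polynomial.C β * Polynomial.X ^ 2) * Polynomial.X ^ 2 +
      Polynomial.C (Polynomial.C δ * Polynomial.X ^ 4) * Polynomial.X +
      Polynomial.C (Polynomial.C ε * Polynomial.X ^ 6)) := by ring
  constructor
  · rw [hQ']
    exact Polynomial.monic_X_pow_add hdQ
  · have hdeg : (Polynomial.X ^ 3 +
        Polynomial.C (Polynomial.C β * Polynomial.X ^ 2) * Polynomial.X ^ 2 +
        Polynomial.C (Polynomial.C δ * Polynomial.X ^ 4) * Polynomial.X +
        Polynomial.C (Polynomial.C ε * Polynomial.X ^ 6) :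
        Polynomial (Polynomial ℂ)).degree = 3 := by
      rw [hQ', add_comm, Polynomial.degree_add_eq_right_of_degree_lt
        (by rwa [Polynomial.degree_X_pow]), Polynomial.degree_X_pow]; rfl
    exact Polynomial.natDegree_eq_of_degree_eq_some hdeg

/-- The quasi-homogeneous polynomial
`h₆ = w² + t³ + α·w·t·x + β·t²·x² + γ·w·x³ + δ·t·x⁴ + ε·x⁶`
is irreducible in `ℂ[x,t,w]` for all values of `α, β, γ, δ, ε ∈ ℂ`.
Here `x = X 0`, `t = X 1`, `w = X 2`. -/
theorem h6_irreducible (α β γ δ ε : ℂ) :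
    Irreducible
      ((X 2) ^ 2 + (X 1) ^ 3 + C α * X 2 * X 1 * X 0 + C β * (X 1) ^ 2 * (X 0) ^ 2 +
        C γ * X 2 * (X 0) ^ 3 + C δ * X 1 * (X 0) ^ 4 + C ε * (X 0) ^ 6 :
        MvPolynomial (Fin 3) ℂ) := by
  rw [← MulEquiv.irreducible_iff h6e]
  have himg :
      h6e ((X 2) ^ 2 + (X 1) ^ 3 + C α * X 2 * X 1 * X 0 + C β * (X 1) ^ 2 * (X 0) ^ 2 +
        C γ * X 2 * (X 0) ^ 3 + C δ * X 1 * (X 0) ^ 4 + C ε * (X 0) ^ 6) =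
      Polynomial.X ^ 2 +
        Polynomial.C (Polynomial.C (Polynomial.C α * Polynomial.X) * Polynomial.X +
          Polynomial.C (Polynomial.C γ * Polynomial.X ^ 3)) * Polynomial.X +
        Polynomial.C (Polynomial.X ^ 3 +
          Polynomial.C (Polynomial.C β * Polynomial.X ^ 2) * Polynomial.X ^ 2 +
          Polynomial.C (Polynomial.C δ * Polynomial.X ^ 4) * Polynomial.X +
          Polynomial.C (Polynomial.C ε * Polynomial.X ^ 6)) := by
    simp only [map_add, map_mul, map_pow, h6e_X0, h6e_X1, h6e_X2, h6e_C]
    ring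
  rw [himg]
  obtain ⟨hQm, hQ3⟩ := h6_Q_spec β δ ε
  apply h6_aux _ _ hQm hQ3
  -- natDegree P ≤ 1
  apply le_trans (Polynomial.natDegree_add_le _ _)
  apply max_le
  · apply le_trans Polynomial.natDegree_mul_le
    rw [Polynomial.natDegree_C, Polynomial.natDegree_X]
  · rw [Polynomial.natDegree_C]
    norm_num
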